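/- If a finite set X ⊆ Aut(T) is N-reduced, then the subgroup G = ⟨X⟩ is purely hyperbolic and X is a free basis of G. -/

import Mathlib

noncomputable section

open Pointwise

namespace TreePaper

variable {V : Type*}

section Defs

variable (T : SimpleGraph V) (v0 : V)

/-- The vertex set of the geodesic segment `[u, w]` in the tree `T`. -/
def seg (u w : V) : Set V := {x | T.dist u x + T.dist x w = T.dist u w}

/-- `|g| = d(v0, g·v0)`. -/
def nrm (g : T ≃g T) : ℕ := T.dist v0 (g v0)

/-- `δ(g, h) = (|g| + |h| - |g⁻¹h|)/2`, as a rational number. -/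
noncomputable def dlt (g h : T ≃g T) : ℚ :=
  ((nrm T v0 g : ℚ) + (nrm T v0 h : ℚ) - (nrm T v0 (g⁻¹ * h) : ℚ)) / 2

/-- An automorphism is elliptic if it fixes a vertex or inverts an edge. -/
def IsElliptic (g : T ≃g T) : Prop :=
  (∃ v : V, g v = v) ∨ (∃ u w : V, T.Adj u w ∧ g u = w ∧ g w = u)

/-- Hyperbolic = not elliptic. -/
def IsHyperbolic (g : T ≃g T) : Prop := ¬ IsElliptic T g

/-- Translation length: the minimum of `d(v, g·v)` over all vertices `v`. -/
noncomputable def tl (g : T ≃g T) : ℕ := sInf (Set.range fun v : V => T.dist v (g v))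

/-- The (vertex set of the) axis of `g`: vertices moved exactly the translation length. -/
def axisSet (g : T ≃g T) : Set V := {v : V | T.dist v (g v) = tl T g}

/-- A subgroup is purely hyperbolic if every nontrivial element is hyperbolic. -/
def PurelyHyperbolic (G : Subgroup (T ≃g T)) : Prop :=
  ∀ g ∈ G, g ≠ 1 → IsHyperbolic T g

/-- `X^± = X ∪ X⁻¹`. -/
def Xpm (X : Set (T ≃g T)) : Set (T ≃g T) := X ∪ X⁻¹

/-- Condition N1: `X ∩ X⁻¹ = ∅`. -/
def N1 (X : Set (T ≃g T)) : Prop := X ∩ X⁻¹ = ∅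

/-- Condition N2: `|xy| ≥ max (|x|, |y|)` for `x, y ∈ X^±` with `x ≠ y⁻¹`. -/
def N2 (X : Set (T ≃g T)) : Prop :=
  ∀ x ∈ Xpm T X, ∀ y ∈ Xpm T X, x ≠ y⁻¹ →
    max (nrm T v0 x) (nrm T v0 y) ≤ nrm T v0 (x * y)

/-- Condition N3: `|xyz| > |x| + |z| - |y|` for suitable `x, y, z ∈ X^±`. -/
def N3 (X : Set (T ≃g T)) : Prop :=
  ∀ x ∈ Xpm T X, ∀ y ∈ Xpm T X, ∀ z ∈ Xpm T X, x ≠ y⁻¹ → y ≠ z⁻¹ →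
    (nrm T v0 x : ℤ) + (nrm T v0 z : ℤ) - (nrm T v0 y : ℤ) < (nrm T v0 (x * y * z) : ℤ)

/-- Condition N2′: `2δ(x⁻¹, y) ≤ min (|x|, |y|)`. -/
noncomputable def N2' (X : Set (T ≃g T)) : Prop :=
  ∀ x ∈ Xpm T X, ∀ y ∈ Xpm T X, x ≠ y⁻¹ →
    2 * dlt T v0 x⁻¹ y ≤ min (nrm T v0 x : ℚ) (nrm T v0 y : ℚ)

/-- Condition N3′: `δ(x⁻¹, y) + δ(y⁻¹, z) < |y|`. -/
noncomputable def N3' (X : Set (T ≃g T)) : Prop :=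
  ∀ x ∈ Xpm T X, ∀ y ∈ Xpm T X, ∀ z ∈ Xpm T X, x ≠ y⁻¹ → y ≠ z⁻¹ →
    dlt T v0 x⁻¹ y + dlt T v0 y⁻¹ z < (nrm T v0 y : ℚ)

/-- `X` is N-reduced: no nontrivial elliptic elements, and N1, N2, N3 hold. -/
def NReduced (X : Set (T ≃g T)) : Prop :=
  (∀ x ∈ X, x ≠ 1 → ¬ IsElliptic T x) ∧ N1 T X ∧ N2 T v0 X ∧ N3 T v0 X

/-- `H(g)`: the vertex set of the initial segment of `[v0, g·v0]` of length `⌊|g|/2⌋`. -/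
def halfSet (g : T ≃g T) : Set V :=
  {x : V | x ∈ seg T v0 (g v0) ∧ T.dist v0 x ≤ nrm T v0 g / 2}

/-- The endpoint of `H(g)`: the vertex on `[v0, g·v0]` at distance `⌊|g|/2⌋` from `v0`.
(Since paths in a tree starting at `v0` are uniquely determined by their endpoints, we
identify the path `H(g)` with this vertex.) -/
noncomputable def halfVertex (g : T ≃g T) : V :=
  letI := Classical.dec (∃ m, m ∈ seg T v0 (g v0) ∧ T.dist v0 m = nrm T v0 g / 2)
  if h : ∃ m, m ∈ seg T v0 (g v0) ∧ T.dist v0 m = nrm T v0 g / 2 then h.choose else v0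

/-- `X` is a free basis of `⟨X⟩`: the homomorphism from the free group on `X` induced
by the inclusion is an isomorphism onto `⟨X⟩`. -/
def IsFreeBasis (X : Set (T ≃g T)) : Prop :=
  Function.Injective (FreeGroup.lift (fun x : X => (x : T ≃g T))) ∧
  MonoidHom.range (FreeGroup.lift (fun x : X => (x : T ≃g T))) = Subgroup.closure X

/-- A subgroup of `Aut T` is discrete iff some finite set of vertices has trivial
pointwise stabilizer. -/
def IsDiscrete (G : Subgroup (T ≃g T)) : Prop :=
  ∃ F : Finset V, ∀ g ∈ G, (∀ v ∈ F, g v = v) → g = 1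

end Defs

section Order

variable (T : SimpleGraph V) (v0 : V)

/-- The assumed properties of the chosen well-ordering of paths starting at `v0`
(paths from `v0` are identified with their endpoints): it is a well-order, shorter
paths precede longer paths, and it is lexicographic. -/
structure IsPathOrder (lt : V → V → Prop) : Prop where
  wellOrder : IsWellOrder V lt
  short : ∀ u w : V, T.dist v0 u < T.dist v0 w → lt u w
  lex : ∀ u w : V, T.dist v0 u = T.dist v0 w → ∀ u' w' : V,
    u' ∈ seg T v0 u → w' ∈ seg T v0 w → T.dist v0 u' = T.dist v0 w' → lt u' w' → lt u w

/-- The ordering `≺` on two-element sets of paths (identified with their endpoints):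
`A ≺ B` iff `A ≠ B` and the least element of the symmetric difference lies in `A`. -/
def pairLt (lt : V → V → Prop) (A B : Set V) : Prop :=
  A ≠ B ∧ ∃ m ∈ (A \ B) ∪ (B \ A), m ∈ A ∧ ∀ x ∈ (A \ B) ∪ (B \ A), x ≠ m → lt m x

/-- `g ≺ h` iff `|g| = |h|` and `{H(g), H(g⁻¹)} ≺ {H(h), H(h⁻¹)}`. -/
noncomputable def autPrec (lt : V → V → Prop) (g h : T ≃g T) : Prop :=
  nrm T v0 g = nrm T v0 h ∧
    pairLt lt {halfVertex T v0 g, halfVertex T v0 g⁻¹}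
      {halfVertex T v0 h, halfVertex T v0 h⁻¹}

/-- `g <* h` iff `|g| < |h|` or `g ≺ h`. -/
noncomputable def autLtStar (lt : V → V → Prop) (g h : T ≃g T) : Prop :=
  nrm T v0 g < nrm T v0 h ∨ autPrec T v0 lt g h

/-- Condition N4: `x <* xy` for all `x, y ∈ X^±` with `x ≠ y⁻¹`. -/
noncomputable def N4 (lt : V → V → Prop) (X : Set (T ≃g T)) : Prop :=
  ∀ x ∈ Xpm T X, ∀ y ∈ Xpm T X, x ≠ y⁻¹ → autLtStar T v0 lt x (x * y)

/-- `X` is strongly N-reduced (w.r.t. `v0` and `<*`): a free basis satisfying N1 and N4. -/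
noncomputable def StronglyNReduced (lt : V → V → Prop) (X : Set (T ≃g T)) : Prop :=
  IsFreeBasis T X ∧ N1 T X ∧ N4 T v0 lt X

end Order

section Words

variable (T : SimpleGraph V)

/-- The product `a₀ a₁ ⋯ a_{k-1}`. -/
def wordProd (a : ℕ → T ≃g T) (k : ℕ) : T ≃g T := ((List.range k).map a).prod

/-- The product `aᵢ a_{i+1} ⋯ a_j` (inclusive endpoints). -/
def segProd (a : ℕ → T ≃g T) (i j : ℕ) : T ≃g T := ((List.range' i (j + 1 - i)).map a).prod

/-- `a 0, …, a (n-1)` is a reduced word in `X`: each letter lies in `X^±` and no letter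
is followed by its inverse. -/
def IsReducedWord (X : Set (T ≃g T)) (a : ℕ → T ≃g T) (n : ℕ) : Prop :=
  (∀ i < n, a i ∈ Xpm T X) ∧ ∀ i, i + 1 < n → a (i + 1) ≠ (a i)⁻¹

end Words

section Geometry

variable (T : SimpleGraph V) (v0 : V)

/-- `p` is a nearest-point projection of `w` to the set `A`. -/
def NearestPt (A : Set V) (w p : V) : Prop :=
  p ∈ A ∧ ∀ z ∈ A, T.dist w p ≤ T.dist w z

/-- Distance between two sets of vertices. -/
noncomputable def setDist (A B : Set V) : ℕ :=
  sInf {n : ℕ | ∃ a ∈ A, ∃ b ∈ B, T.dist a b = n}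

/-- A vertex `p` of the axis of `g` lies in the half-open interval `U_g^0`
(of radius `l(g)/2` about the projection `c` of `v0`, closed at the `<`-smaller end):
either `d(c,p) < l(g)/2`, or `d(c,p) = l(g)/2` and `p` precedes the opposite boundary
vertex in the ordering. -/
def inU0 (lt : V → V → Prop) (g : T ≃g T) (c p : V) : Prop :=
  2 * T.dist c p < tl T g ∨
    (2 * T.dist c p = tl T g ∧
      ∀ p', p' ∈ axisSet T g → T.dist c p' = T.dist c p → p' ≠ p → lt p p')

/-- `X` admits a fundamental system: `X` has no nontrivial elliptic elements and for all
distinct `g, h ∈ X`, the projection of the axis of `h` to the axis of `g` is contained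
in `U_g^0`. -/
def AdmitsFundamentalSystem (lt : V → V → Prop) (X : Set (T ≃g T)) : Prop :=
  (∀ x ∈ X, x ≠ 1 → ¬ IsElliptic T x) ∧
  ∀ g ∈ X, ∀ h ∈ X, g ≠ h → ∀ c z p : V,
    NearestPt T (axisSet T g) v0 c → z ∈ axisSet T h →
    NearestPt T (axisSet T g) z p → inU0 T lt g c p

end Geometry


section Aux

open SimpleGraph

variable [DecidableEq V] {T : SimpleGraph V}

/-! ### Tree geometry -/

private lemma aux_path_length (hT : T.IsTree) {u v : V} {p : T.Walk u v} (hp : p.IsPath) :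
    p.length = T.dist u v := by
  obtain ⟨q, hq⟩ := hT.isConnected.exists_walk_length_eq_dist u v
  have h1 : (⟨p, hp⟩ : T.Path u v) = ⟨q.bypass, q.bypass_isPath⟩ := hT.IsAcyclic.path_unique _ _
  have h2 : p = q.bypass := congrArg Subtype.val h1
  have h5 : p.length = q.bypass.length := by rw [h2]
  have h3 := q.length_bypass_le
  have h4 := SimpleGraph.dist_le p
  omega

private lemma aux_isPath (hT : T.IsTree) {u v : V} (p : T.Walk u v)
    (h : p.length = T.dist u v) : p.IsPath := by
  induction p with
  | nil => exact SimpleGraph.Walk.IsPath.nil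
  | @cons u w v hadj q ih =>
    have hq1 : T.dist w v ≤ q.length := SimpleGraph.dist_le q
    have huw : T.dist u w ≤ 1 := by
      have := SimpleGraph.dist_le (SimpleGraph.Walk.cons hadj SimpleGraph.Walk.nil)
      simpa using this
    have hq2 : T.dist u v ≤ T.dist u w + T.dist w v := hT.isConnected.dist_triangle
    simp only [SimpleGraph.Walk.length_cons] at h
    have hql : q.length = T.dist w v := by omega
    have hqp := ih hql
    rw [SimpleGraph.Walk.cons_isPath_iff]
    refine ⟨hqp, fun hu => ?_⟩
    have hlen : (q.takeUntil u hu).length + (q.dropUntil u hu).length = q.length := by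
      rw [← SimpleGraph.Walk.length_append, q.take_spec hu]
    have h5 : T.dist u v ≤ (q.dropUntil u hu).length := SimpleGraph.dist_le _
    have h6 : 1 ≤ (q.takeUntil u hu).length := by
      by_contra hc
      push_neg at hc
      have : (q.takeUntil u hu).length = 0 := by omega
      exact hadj.ne (SimpleGraph.Walk.eq_of_length_eq_zero this).symm
    omega

private lemma aux_mem_dist (hT : T.IsTree) {u v x : V} {p : T.Walk u v} (hp : p.IsPath)
    (hx : x ∈ p.support) : T.dist u x + T.dist x v = T.dist u v := by
  have h1 := aux_path_length hT (hp.takeUntil hx)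
  have h2 := aux_path_length hT (hp.dropUntil hx)
  have h3 : (p.takeUntil x hx).length + (p.dropUntil x hx).length = p.length := by
    rw [← SimpleGraph.Walk.length_append, p.take_spec hx]
  have h4 := aux_path_length hT hp
  omega

private lemma aux_append_isPath {a m b : V} {p : T.Walk a m} {q : T.Walk m b}
    (hp : p.IsPath) (hq : q.IsPath)
    (hj : ∀ x ∈ p.support, x ∈ q.support → x = m) : (p.append q).IsPath := by
  rw [SimpleGraph.Walk.isPath_def, SimpleGraph.Walk.support_append]
  have hqn : q.support.Nodup := hq.support_nodup
  have hqt : q.support = m :: q.support.tail := q.support_eq_cons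
  have hmt : m ∉ q.support.tail := by
    rw [hqt] at hqn
    exact (List.nodup_cons.mp hqn).1
  refine List.Nodup.append hp.support_nodup ((List.tail_sublist _).nodup hqn) ?_
  intro x hxp hxt
  have hxq : x ∈ q.support := by rw [hqt]; exact List.mem_cons_of_mem _ hxt
  exact hmt ((hj x hxp hxq) ▸ hxt)

private lemma aux_median (hT : T.IsTree) (a b c : V) :
    ∃ m : V, T.dist a m + T.dist m b = T.dist a b ∧ T.dist a m + T.dist m c = T.dist a c ∧
      T.dist b m + T.dist m c = T.dist b c := by
  obtain ⟨P, hPl⟩ := hT.isConnected.exists_walk_length_eq_dist b c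
  have hP : P.IsPath := aux_isPath hT P hPl
  obtain ⟨m, hmS, hmin⟩ := P.support.toFinset.exists_min_image (fun x => T.dist a x)
    ⟨b, List.mem_toFinset.mpr P.start_mem_support⟩
  have hmP : m ∈ P.support := List.mem_toFinset.mp hmS
  have hmin' : ∀ x ∈ P.support, T.dist a m ≤ T.dist a x := fun x hx =>
    hmin x (List.mem_toFinset.mpr hx)
  have hbc : T.dist b m + T.dist m c = T.dist b c := aux_mem_dist hT hP hmP
  obtain ⟨pa, hpal⟩ := hT.isConnected.exists_walk_length_eq_dist a m
  have hpa : pa.IsPath := aux_isPath hT pa hpal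
  have key : ∀ (z : V) (r : T.Walk m z), r.IsPath → (∀ x ∈ r.support, x ∈ P.support) →
      T.dist a m + T.dist m z = T.dist a z := by
    intro z r hr hrsub
    have hj : ∀ x ∈ pa.support, x ∈ r.support → x = m := by
      intro x hxa hxr
      have h1 : T.dist a x + T.dist x m = T.dist a m := aux_mem_dist hT hpa hxa
      have h2 : T.dist a m ≤ T.dist a x := hmin' x (hrsub x hxr)
      have h3 : T.dist x m = 0 := by omega
      exact hT.isConnected.dist_eq_zero_iff.mp h3
    have happ := aux_append_isPath hpa hr hj
    have hlen := aux_path_length hT happ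
    rw [SimpleGraph.Walk.length_append, hpal, aux_path_length hT hr] at hlen
    exact hlen
  refine ⟨m, ?_, ?_, hbc⟩
  · refine key b (P.takeUntil m hmP).reverse (hP.takeUntil hmP).reverse ?_
    intro x hx
    rw [SimpleGraph.Walk.support_reverse, List.mem_reverse] at hx
    exact P.support_takeUntil_subset hmP hx
  · exact key c (P.dropUntil m hmP) (hP.dropUntil hmP)
      (fun x hx => P.support_dropUntil_subset hmP hx)

private lemma aux_two_point (hT : T.IsTree) {w b x y : V}
    (hx : T.dist w x + T.dist x b = T.dist w b) (hy : T.dist w y + T.dist y b = T.dist w b)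
    (hle : T.dist w x ≤ T.dist w y) : T.dist w x + T.dist x y = T.dist w y := by
  obtain ⟨P, hPl⟩ := hT.isConnected.exists_walk_length_eq_dist w b
  have hP : P.IsPath := aux_isPath hT P hPl
  have hmem : ∀ z : V, T.dist w z + T.dist z b = T.dist w b → z ∈ P.support := by
    intro z hz
    obtain ⟨p1, hp1⟩ := hT.isConnected.exists_walk_length_eq_dist w z
    obtain ⟨p2, hp2⟩ := hT.isConnected.exists_walk_length_eq_dist z b
    have hq : (p1.append p2).length = T.dist w b := by
      rw [SimpleGraph.Walk.length_append, hp1, hp2, hz]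
    have hqP : (p1.append p2).IsPath := aux_isPath hT _ hq
    have huniq : (⟨p1.append p2, hqP⟩ : T.Path w b) = ⟨P, hP⟩ := hT.IsAcyclic.path_unique _ _
    have heq : p1.append p2 = P := congrArg Subtype.val huniq
    rw [← heq, SimpleGraph.Walk.mem_support_append_iff]
    exact Or.inr p2.start_mem_support
  have hxP := hmem x hx
  have hyP := hmem y hy
  have hyP' : y ∈ (P.takeUntil x hxP).support ∨ y ∈ (P.dropUntil x hxP).support := by
    rw [← SimpleGraph.Walk.mem_support_append_iff, P.take_spec hxP]
    exact hyP
  rcases hyP' with h | h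
  · have h1 : T.dist w y + T.dist y x = T.dist w x := aux_mem_dist hT (hP.takeUntil hxP) h
    have h2 : T.dist y x = T.dist x y := SimpleGraph.dist_comm
    omega
  · have h1 : T.dist x y + T.dist y b = T.dist x b := aux_mem_dist hT (hP.dropUntil hxP) h
    omega

private lemma aux_gromov (hT : T.IsTree) (w a b c : V) :
    min ((T.dist w a : ℤ) + T.dist w b - T.dist a b) ((T.dist w b : ℤ) + T.dist w c - T.dist b c)
      ≤ (T.dist w a : ℤ) + T.dist w c - T.dist a c := by
  obtain ⟨m1, h1a, h1b, h1c⟩ := aux_median hT w a b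
  obtain ⟨m2, h2a, h2b, h2c⟩ := aux_median hT w b c
  have t1 : T.dist a c ≤ T.dist a m1 + T.dist m1 c := hT.isConnected.dist_triangle
  have t2 : T.dist m1 c ≤ T.dist m1 m2 + T.dist m2 c := hT.isConnected.dist_triangle
  have cm1 : T.dist m1 a = T.dist a m1 := SimpleGraph.dist_comm
  have cm2 : T.dist m2 b = T.dist b m2 := SimpleGraph.dist_comm
  have cm3 : T.dist m2 m1 = T.dist m1 m2 := SimpleGraph.dist_comm
  rcases le_total (T.dist w m1) (T.dist w m2) with hle | hle
  · have htp := aux_two_point hT (x := m1) (y := m2) (b := b) h1b h2a hle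
    refine le_trans (min_le_left _ _) ?_
    omega
  · have htp := aux_two_point hT (x := m2) (y := m1) (b := b) h2a h1b hle
    refine le_trans (min_le_right _ _) ?_
    omega

/-! ### Automorphisms as isometries -/

private lemma aux_iso_dist (hT : T.IsTree) (g : T ≃g T) (u v : V) :
    T.dist (g u) (g v) = T.dist u v := by
  have key : ∀ (h : T ≃g T) (x y : V), T.dist (h x) (h y) ≤ T.dist x y := by
    intro h x y
    obtain ⟨p, hp⟩ := hT.isConnected.exists_walk_length_eq_dist x y
    have := SimpleGraph.dist_le (p.map h.toHom)
    rwa [SimpleGraph.Walk.length_map, hp] at this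
  refine le_antisymm (key g u v) ?_
  have h2 := key g⁻¹ (g u) (g v)
  rwa [RelIso.inv_apply_self, RelIso.inv_apply_self] at h2

private lemma aux_nrm_inv (hT : T.IsTree) (v0 : V) (g : T ≃g T) :
    nrm T v0 g⁻¹ = nrm T v0 g := by
  have h1 : T.dist (g v0) (g (g⁻¹ v0)) = T.dist v0 (g⁻¹ v0) := aux_iso_dist hT g v0 (g⁻¹ v0)
  rw [RelIso.apply_inv_self] at h1
  show T.dist v0 (g⁻¹ v0) = T.dist v0 (g v0)
  rw [← h1, SimpleGraph.dist_comm]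

private lemma aux_one_notmem {v0 : V} {X : Set (T ≃g T)} (hX : NReduced T v0 X) :
    (1 : T ≃g T) ∉ X := by
  intro h1
  have h2 : (1 : T ≃g T) ∈ X ∩ X⁻¹ := ⟨h1, by rw [Set.mem_inv, inv_one]; exact h1⟩
  rw [hX.2.1] at h2
  exact h2

private lemma aux_nrm_pos (hT : T.IsTree) {v0 : V} {X : Set (T ≃g T)} (hX : NReduced T v0 X)
    {g : T ≃g T} (hg : g ∈ Xpm T X) : 1 ≤ nrm T v0 g := by
  have key : ∀ h ∈ X, 1 ≤ nrm T v0 h := by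
    intro h hh
    have hne : h ≠ 1 := by rintro rfl; exact aux_one_notmem hX hh
    have hell := hX.1 h hh hne
    have hmv : h v0 ≠ v0 := fun he => hell (Or.inl ⟨v0, he⟩)
    exact hT.isConnected.pos_dist_of_ne (Ne.symm hmv)
  rcases hg with h | h
  · exact key g h
  · have hmem : g⁻¹ ∈ X := Set.mem_inv.mp h
    have := key g⁻¹ hmem
    rwa [aux_nrm_inv hT] at this

private lemma aux_N3D (hT : T.IsTree) {v0 : V} {X : Set (T ≃g T)} (hX : NReduced T v0 X)
    {x y z : T ≃g T} (hx : x ∈ Xpm T X) (hy : y ∈ Xpm T X) (hz : z ∈ Xpm T X)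
    (hxy : x ≠ y⁻¹) (hyz : y ≠ z⁻¹) :
    ((nrm T v0 x : ℤ) + nrm T v0 y - nrm T v0 (x * y))
      + ((nrm T v0 y : ℤ) + nrm T v0 z - nrm T v0 (y * z)) < 2 * nrm T v0 y := by
  have hN3 := hX.2.2.2 x hx y hy z hz hxy hyz
  have hg := aux_gromov hT v0 (x⁻¹ v0) (y v0) ((y * z) v0)
  have e1 : T.dist v0 (x⁻¹ v0) = nrm T v0 x := aux_nrm_inv hT v0 x
  have e2 : T.dist v0 (y v0) = nrm T v0 y := rfl
  have e3 : T.dist v0 ((y * z) v0) = nrm T v0 (y * z) := rfl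
  have e4 : T.dist (x⁻¹ v0) (y v0) = nrm T v0 (x * y) := by
    have h := aux_iso_dist hT x (x⁻¹ v0) (y v0)
    rw [RelIso.apply_inv_self] at h
    exact h.symm
  have e5 : T.dist (x⁻¹ v0) ((y * z) v0) = nrm T v0 (x * y * z) := by
    have h := aux_iso_dist hT x (x⁻¹ v0) ((y * z) v0)
    rw [RelIso.apply_inv_self] at h
    exact h.symm
  have e6 : T.dist (y v0) ((y * z) v0) = nrm T v0 z := aux_iso_dist hT y v0 (z v0)
  rw [e1, e2, e3, e4, e5, e6] at hg
  rcases min_le_iff.mp hg with h | h <;> omega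

private lemma aux_N2D {v0 : V} {X : Set (T ≃g T)} (hX : NReduced T v0 X)
    {x y : T ≃g T} (hx : x ∈ Xpm T X) (hy : y ∈ Xpm T X) (hxy : x ≠ y⁻¹) :
    ((nrm T v0 x : ℤ) + nrm T v0 y - nrm T v0 (x * y) ≤ (nrm T v0 x : ℤ))
      ∧ ((nrm T v0 x : ℤ) + nrm T v0 y - nrm T v0 (x * y) ≤ (nrm T v0 y : ℤ)) := by
  have h := hX.2.2.1 x hx y hy hxy
  have h1 : nrm T v0 x ≤ nrm T v0 (x * y) := le_trans (le_max_left _ _) h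
  have h2 : nrm T v0 y ≤ nrm T v0 (x * y) := le_trans (le_max_right _ _) h
  omega

/-! ### The broken-geodesic lemma -/

private lemma aux_bpl (hT : T.IsTree) (x : ℕ → V) :
    ∀ n : ℕ, (∀ j, j + 3 ≤ n →
        (((T.dist (x (j+1)) (x j) : ℤ) + T.dist (x (j+1)) (x (j+2)) - T.dist (x j) (x (j+2)))
        + ((T.dist (x (j+2)) (x (j+1)) : ℤ) + T.dist (x (j+2)) (x (j+3)) - T.dist (x (j+1)) (x (j+3))))
        < 2 * T.dist (x (j+1)) (x (j+2))) →
      (T.dist (x 0) (x n) : ℤ) =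
        (∑ i ∈ Finset.range n, (T.dist (x i) (x (i+1)) : ℤ))
        - ∑ j ∈ Finset.range (n-1),
            ((T.dist (x (j+1)) (x j) : ℤ) + T.dist (x (j+1)) (x (j+2)) - T.dist (x j) (x (j+2))) := by
  intro n
  induction n using Nat.strong_induction_on with
  | _ n ih =>
    match n, ih with
    | 0, _ => intro _; simp [SimpleGraph.dist_self]
    | 1, _ => intro _; simp
    | 2, _ =>
      intro _
      have hs1 : (∑ i ∈ Finset.range 2, (T.dist (x i) (x (i+1)) : ℤ))
          = (T.dist (x 0) (x 1) : ℤ) + T.dist (x 1) (x 2) := by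
        rw [Finset.sum_range_succ, Finset.sum_range_one]
      have hs2 : (∑ j ∈ Finset.range (2-1),
            ((T.dist (x (j+1)) (x j) : ℤ) + T.dist (x (j+1)) (x (j+2)) - T.dist (x j) (x (j+2))))
          = (T.dist (x 1) (x 0) : ℤ) + T.dist (x 1) (x 2) - T.dist (x 0) (x 2) := by
        rw [show (2:ℕ) - 1 = 1 from rfl, Finset.sum_range_one]
      rw [hs1, hs2]
      have c1 : T.dist (x 1) (x 0) = T.dist (x 0) (x 1) := SimpleGraph.dist_comm
      omega
    | (m+3), ih =>
      intro hyp
      have h1 := ih (m+2) (by omega) (fun j hj => hyp j (by omega))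
      have h2 := ih (m+1) (by omega) (fun j hj => hyp j (by omega))
      have h1' : (T.dist (x 0) (x (m+2)) : ℤ) =
          (∑ i ∈ Finset.range (m+2), (T.dist (x i) (x (i+1)) : ℤ))
          - ∑ j ∈ Finset.range (m+1),
              ((T.dist (x (j+1)) (x j) : ℤ) + T.dist (x (j+1)) (x (j+2)) - T.dist (x j) (x (j+2))) := h1
      have h2' : (T.dist (x 0) (x (m+1)) : ℤ) =
          (∑ i ∈ Finset.range (m+1), (T.dist (x i) (x (i+1)) : ℤ))
          - ∑ j ∈ Finset.range m,
              ((T.dist (x (j+1)) (x j) : ℤ) + T.dist (x (j+1)) (x (j+2)) - T.dist (x j) (x (j+2))) := h2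
      have hjm := hyp m (by omega)
      have G1 := aux_gromov hT (x (m+2)) (x 0) (x (m+1)) (x (m+3))
      have G2 := aux_gromov hT (x (m+2)) (x (m+1)) (x 0) (x (m+3))
      show (T.dist (x 0) (x (m+3)) : ℤ) =
        (∑ i ∈ Finset.range (m+3), (T.dist (x i) (x (i+1)) : ℤ))
        - ∑ j ∈ Finset.range (m+2),
            ((T.dist (x (j+1)) (x j) : ℤ) + T.dist (x (j+1)) (x (j+2)) - T.dist (x j) (x (j+2)))
      have s1 : (∑ i ∈ Finset.range (m+3), (T.dist (x i) (x (i+1)) : ℤ))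
          = (∑ i ∈ Finset.range (m+2), (T.dist (x i) (x (i+1)) : ℤ)) + T.dist (x (m+2)) (x (m+3)) :=
        Finset.sum_range_succ _ _
      have s2 : (∑ i ∈ Finset.range (m+2), (T.dist (x i) (x (i+1)) : ℤ))
          = (∑ i ∈ Finset.range (m+1), (T.dist (x i) (x (i+1)) : ℤ)) + T.dist (x (m+1)) (x (m+2)) :=
        Finset.sum_range_succ _ _
      have t1 : (∑ j ∈ Finset.range (m+2),
            ((T.dist (x (j+1)) (x j) : ℤ) + T.dist (x (j+1)) (x (j+2)) - T.dist (x j) (x (j+2))))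
          = (∑ j ∈ Finset.range (m+1),
            ((T.dist (x (j+1)) (x j) : ℤ) + T.dist (x (j+1)) (x (j+2)) - T.dist (x j) (x (j+2))))
            + ((T.dist (x (m+2)) (x (m+1)) : ℤ) + T.dist (x (m+2)) (x (m+3)) - T.dist (x (m+1)) (x (m+3))) :=
        Finset.sum_range_succ _ _
      have t2 : (∑ j ∈ Finset.range (m+1),
            ((T.dist (x (j+1)) (x j) : ℤ) + T.dist (x (j+1)) (x (j+2)) - T.dist (x j) (x (j+2))))
          = (∑ j ∈ Finset.range m,
            ((T.dist (x (j+1)) (x j) : ℤ) + T.dist (x (j+1)) (x (j+2)) - T.dist (x j) (x (j+2))))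
            + ((T.dist (x (m+1)) (x m) : ℤ) + T.dist (x (m+1)) (x (m+2)) - T.dist (x m) (x (m+2))) :=
        Finset.sum_range_succ _ _
      have c1 : T.dist (x (m+2)) (x 0) = T.dist (x 0) (x (m+2)) := SimpleGraph.dist_comm
      have c2 : T.dist (x (m+2)) (x (m+1)) = T.dist (x (m+1)) (x (m+2)) := SimpleGraph.dist_comm
      have c3 : T.dist (x (m+1)) (x 0) = T.dist (x 0) (x (m+1)) := SimpleGraph.dist_comm
      have c4 : T.dist (x 0) (x (m+3)) = T.dist (x 0) (x (m+3)) := rfl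
      rcases min_le_iff.mp G1 with g1 | g1 <;> rcases min_le_iff.mp G2 with g2 | g2 <;> omega

/-! ### Norm of a reduced word -/

private lemma aux_getD_range {α : Type*} (A : List α) (d : α) :
    (List.range A.length).map (fun i => A.getD i d) = A := by
  apply List.ext_getElem
  · simp
  · intro i h1 h2
    simp only [List.getElem_map, List.getElem_range]
    exact List.getD_eq_getElem A d h2

private lemma aux_wordProd_succ (a : ℕ → T ≃g T) (k : ℕ) :
    wordProd T a (k+1) = wordProd T a k * a k := by
  show ((List.range (k+1)).map a).prod = _
  rw [List.range_succ, List.map_append, List.prod_append]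
  simp [wordProd]

private lemma aux_getD_mem {α : Type*} (A : List α) (d : α) {i : ℕ} (h : i < A.length) :
    A.getD i d ∈ A := by
  rw [List.getD_eq_getElem A d h]
  exact List.getElem_mem h

private lemma aux_chain_getD {G : Type*} [Group G] {A : List G}
    (hch : A.Chain' fun p q => q ≠ p⁻¹) {i : ℕ} (h : i + 1 < A.length) :
    A.getD i 1 ≠ (A.getD (i+1) 1)⁻¹ := by
  have h2 := List.isChain_iff_getElem.mp hch i h
  rw [List.getD_eq_getElem A 1 (by omega), List.getD_eq_getElem A 1 h]
  intro heq
  apply h2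
  rw [heq, inv_inv]

private lemma aux_wordnorm (hT : T.IsTree) {v0 : V} {X : Set (T ≃g T)} (hX : NReduced T v0 X)
    (A : List (T ≃g T)) (hmem : ∀ g ∈ A, g ∈ Xpm T X)
    (hch : A.Chain' fun p q => q ≠ p⁻¹) :
    (nrm T v0 A.prod : ℤ) =
      (∑ i ∈ Finset.range A.length, (nrm T v0 (A.getD i 1) : ℤ))
      - ∑ j ∈ Finset.range (A.length - 1),
          ((nrm T v0 (A.getD j 1) : ℤ) + nrm T v0 (A.getD (j+1) 1)
            - nrm T v0 (A.getD j 1 * A.getD (j+1) 1)) := by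
  let a : ℕ → T ≃g T := fun i => A.getD i 1
  let x : ℕ → V := fun i => wordProd T a i v0
  have hmem' : ∀ i, i < A.length → a i ∈ Xpm T X := fun i h => hmem _ (aux_getD_mem A 1 h)
  have hadj' : ∀ i, i + 1 < A.length → a i ≠ (a (i+1))⁻¹ := fun i h => aux_chain_getD hch h
  have hd : ∀ i, T.dist (x i) (x (i+1)) = nrm T v0 (a i) := by
    intro i
    have h1 : x (i+1) = wordProd T a i (a i v0) := by
      show wordProd T a (i+1) v0 = _
      rw [aux_wordProd_succ]
      rfl
    show T.dist (wordProd T a i v0) (x (i+1)) = _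
    rw [h1]
    exact aux_iso_dist hT (wordProd T a i) v0 (a i v0)
  have hd2 : ∀ i, T.dist (x i) (x (i+2)) = nrm T v0 (a i * a (i+1)) := by
    intro i
    have h1 : x (i+2) = wordProd T a i ((a i * a (i+1)) v0) := by
      show wordProd T a ((i+1)+1) v0 = _
      rw [aux_wordProd_succ, aux_wordProd_succ]
      rfl
    show T.dist (wordProd T a i v0) (x (i+2)) = _
    rw [h1]
    exact aux_iso_dist hT (wordProd T a i) v0 ((a i * a (i+1)) v0)
  have hdA : ∀ j : ℕ, T.dist (x (j+1)) (x (j+2)) = nrm T v0 (a (j+1)) := fun j => hd (j+1)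
  have hdB : ∀ j : ℕ, T.dist (x (j+2)) (x (j+3)) = nrm T v0 (a (j+2)) := fun j => hd (j+2)
  have hdC : ∀ j : ℕ, T.dist (x (j+1)) (x (j+3)) = nrm T v0 (a (j+1) * a (j+2)) :=
    fun j => hd2 (j+1)
  have key := aux_bpl hT x A.length ?_
  · have hx0 : x 0 = v0 := by
      show ((List.range 0).map a).prod v0 = v0
      simp
    have hprod : wordProd T a A.length = A.prod := by
      show ((List.range A.length).map fun i => A.getD i 1).prod = A.prod
      rw [aux_getD_range A 1]
    have hxn : x A.length = A.prod v0 := by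
      show wordProd T a A.length v0 = _
      rw [hprod]
    rw [hx0, hxn] at key
    have e1 : (∑ i ∈ Finset.range A.length, (T.dist (x i) (x (i+1)) : ℤ))
        = ∑ i ∈ Finset.range A.length, (nrm T v0 (A.getD i 1) : ℤ) :=
      Finset.sum_congr rfl (fun i _ => by rw [hd i])
    have e2 : (∑ j ∈ Finset.range (A.length - 1),
          ((T.dist (x (j+1)) (x j) : ℤ) + T.dist (x (j+1)) (x (j+2)) - T.dist (x j) (x (j+2))))
        = ∑ j ∈ Finset.range (A.length - 1),
          ((nrm T v0 (A.getD j 1) : ℤ) + nrm T v0 (A.getD (j+1) 1)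
            - nrm T v0 (A.getD j 1 * A.getD (j+1) 1)) := by
      refine Finset.sum_congr rfl (fun j _ => ?_)
      rw [show T.dist (x (j+1)) (x j) = T.dist (x j) (x (j+1)) from SimpleGraph.dist_comm,
        hd j, hdA j, hd2 j]
    rw [e1, e2] at key
    exact key
  · intro j hj
    have h3d := aux_N3D hT hX (hmem' j (by omega)) (hmem' (j+1) (by omega))
      (hmem' (j+2) (by omega)) (hadj' j (by omega)) (hadj' (j+1) (by omega))
    rw [show T.dist (x (j+1)) (x j) = T.dist (x j) (x (j+1)) from SimpleGraph.dist_comm,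
      show T.dist (x (j+2)) (x (j+1)) = T.dist (x (j+1)) (x (j+2)) from SimpleGraph.dist_comm,
      hd j, hdA j, hdB j, hdC j, hd2 j]
    exact h3d

private lemma aux_prod_pos (hT : T.IsTree) {v0 : V} {X : Set (T ≃g T)} (hX : NReduced T v0 X)
    (A : List (T ≃g T)) (hne : A ≠ []) (hmem : ∀ g ∈ A, g ∈ Xpm T X)
    (hch : A.Chain' fun p q => q ≠ p⁻¹) : 1 ≤ nrm T v0 A.prod := by
  have key := aux_wordnorm hT hX A hmem hch
  have hmem' : ∀ i, i < A.length → A.getD i 1 ∈ Xpm T X := fun i h => hmem _ (aux_getD_mem A 1 h)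
  have hn1 : 1 ≤ A.length := List.length_pos_iff.mpr hne
  have hsum : (∑ i ∈ Finset.range A.length, (nrm T v0 (A.getD i 1) : ℤ))
      = (∑ j ∈ Finset.range (A.length - 1), (nrm T v0 (A.getD (j+1) 1) : ℤ))
        + nrm T v0 (A.getD 0 1) := by
    have h := Finset.sum_range_succ' (fun i => (nrm T v0 (A.getD i 1) : ℤ)) (A.length - 1)
    rw [show A.length - 1 + 1 = A.length from by omega] at h
    exact h
  have hterm : ∀ j ∈ Finset.range (A.length - 1),
      ((nrm T v0 (A.getD j 1) : ℤ) + nrm T v0 (A.getD (j+1) 1)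
        - nrm T v0 (A.getD j 1 * A.getD (j+1) 1))
        ≤ (nrm T v0 (A.getD (j+1) 1) : ℤ) := by
    intro j hj
    rw [Finset.mem_range] at hj
    exact (aux_N2D hX (hmem' j (by omega)) (hmem' (j+1) (by omega))
      (aux_chain_getD hch (by omega))).2
  have hle := Finset.sum_le_sum hterm
  have h0 : (1 : ℤ) ≤ nrm T v0 (A.getD 0 1) := by
    exact_mod_cast aux_nrm_pos hT hX (hmem' 0 (by omega))
  omega

private lemma aux_shift_sum (h : ℕ → ℤ) (m : ℕ) (hm : 1 ≤ m) :
    ∑ j ∈ Finset.range m, h ((j+1) % m) = ∑ j ∈ Finset.range m, h j := by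
  obtain ⟨k, rfl⟩ : ∃ k, m = k + 1 := ⟨m - 1, by omega⟩
  rw [Finset.sum_range_succ, Finset.sum_range_succ' h k]
  have h1 : ∀ j ∈ Finset.range k, h ((j+1) % (k+1)) = h (j+1) := by
    intro j hj
    rw [Finset.mem_range] at hj
    rw [Nat.mod_eq_of_lt (by omega)]
  rw [Finset.sum_congr rfl h1, Nat.mod_self]

private lemma aux_square (hT : T.IsTree) {v0 : V} {X : Set (T ≃g T)} (hX : NReduced T v0 X)
    (A : List (T ≃g T)) (hne : A ≠ []) (hmem : ∀ g ∈ A, g ∈ Xpm T X)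
    (hch : A.Chain' fun p q => q ≠ p⁻¹)
    (hjunc : ∀ p ∈ A.getLast?, ∀ q ∈ A.head?, q ≠ p⁻¹) :
    (nrm T v0 A.prod : ℤ) < nrm T v0 (A.prod * A.prod) := by
  have hm : 1 ≤ A.length := List.length_pos_iff.mpr hne
  set m := A.length with hmdef
  have hmem' : ∀ i, i < m → A.getD i 1 ∈ Xpm T X := fun i h => hmem _ (aux_getD_mem A 1 h)
  -- junction adjacency in getD form
  have hj0 : A.getD 0 1 = A.head hne := by
    rw [List.getD_eq_getElem A 1 (by omega)]
    exact List.getElem_zero (by omega)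
  have hjl : A.getD (m - 1) 1 = A.getLast hne := by
    rw [List.getD_eq_getElem A 1 (by omega), List.getLast_eq_getElem]
  have hjunc' : A.getD 0 1 ≠ (A.getD (m - 1) 1)⁻¹ := by
    rw [hj0, hjl]
    exact hjunc _ (by rw [List.getLast?_eq_getLast hne]; rfl) _
      (by rw [List.head?_eq_head hne]; rfl)
  have hcyc : ∀ j, j < m → A.getD j 1 ≠ (A.getD ((j+1) % m) 1)⁻¹ := by
    intro j hjm
    rcases lt_or_ge (j+1) m with h | h
    · rw [Nat.mod_eq_of_lt h]
      exact aux_chain_getD hch h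
    · have hj : j = m - 1 := by omega
      have : (j+1) % m = 0 := by
        rw [show j + 1 = m from by omega, Nat.mod_self]
      rw [this, hj]
      intro heq
      exact hjunc' (by rw [heq, inv_inv])
  -- formula for A
  have key1 := aux_wordnorm hT hX A hmem hch
  rw [← hmdef] at key1
  -- formula for A ++ A
  have hch2 : (A ++ A).Chain' fun p q => q ≠ p⁻¹ :=
    List.isChain_append.mpr ⟨hch, hch, hjunc⟩
  have hmem2 : ∀ g ∈ A ++ A, g ∈ Xpm T X := by
    intro g hg
    rcases List.mem_append.mp hg with h | h <;> exact hmem g h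
  have key2 := aux_wordnorm hT hX (A ++ A) hmem2 hch2
  rw [List.prod_append] at key2
  have hlen2 : (A ++ A).length = m + m := by rw [List.length_append]
  -- getD facts for A ++ A
  have hc1 : ∀ i, i < m → (A ++ A).getD i 1 = A.getD i 1 := fun i h =>
    List.getD_append A A 1 i h
  have hc2 : ∀ i, (A ++ A).getD (m + i) 1 = A.getD i 1 := by
    intro i
    rw [List.getD_append_right A A 1 (m + i) (by omega)]
    congr 1
    omega
  -- the letter sum for A ++ A
  have e1 : (∑ i ∈ Finset.range ((A ++ A).length), (nrm T v0 ((A ++ A).getD i 1) : ℤ))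
      = 2 * ∑ i ∈ Finset.range m, (nrm T v0 (A.getD i 1) : ℤ) := by
    rw [hlen2, Finset.sum_range_add]
    have ha : ∀ i ∈ Finset.range m, (nrm T v0 ((A ++ A).getD i 1) : ℤ)
        = (nrm T v0 (A.getD i 1) : ℤ) := by
      intro i hi
      rw [Finset.mem_range] at hi
      rw [hc1 i hi]
    have hb : ∀ i ∈ Finset.range m, (nrm T v0 ((A ++ A).getD (m + i) 1) : ℤ)
        = (nrm T v0 (A.getD i 1) : ℤ) := by
      intro i _
      rw [hc2 i]
    rw [Finset.sum_congr rfl ha, Finset.sum_congr rfl hb]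
    ring
  -- the junction sum for A ++ A
  have e2 : (∑ j ∈ Finset.range ((A ++ A).length - 1),
        ((nrm T v0 ((A ++ A).getD j 1) : ℤ) + nrm T v0 ((A ++ A).getD (j+1) 1)
          - nrm T v0 ((A ++ A).getD j 1 * (A ++ A).getD (j+1) 1)))
      = 2 * (∑ j ∈ Finset.range (m - 1),
          ((nrm T v0 (A.getD j 1) : ℤ) + nrm T v0 (A.getD (j+1) 1)
            - nrm T v0 (A.getD j 1 * A.getD (j+1) 1)))
        + ((nrm T v0 (A.getD (m-1) 1) : ℤ) + nrm T v0 (A.getD 0 1)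
            - nrm T v0 (A.getD (m-1) 1 * A.getD 0 1)) := by
    rw [hlen2, show m + m - 1 = (m - 1) + m from by omega, Finset.sum_range_add]
    have ha : ∀ j ∈ Finset.range (m - 1),
        ((nrm T v0 ((A ++ A).getD j 1) : ℤ) + nrm T v0 ((A ++ A).getD (j+1) 1)
          - nrm T v0 ((A ++ A).getD j 1 * (A ++ A).getD (j+1) 1))
        = ((nrm T v0 (A.getD j 1) : ℤ) + nrm T v0 (A.getD (j+1) 1)
          - nrm T v0 (A.getD j 1 * A.getD (j+1) 1)) := by
      intro j hj
      rw [Finset.mem_range] at hj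
      rw [hc1 j (by omega), hc1 (j+1) (by omega)]
    rw [Finset.sum_congr rfl ha]
    -- second block
    have hsecond : (∑ j ∈ Finset.range m,
          ((nrm T v0 ((A ++ A).getD ((m-1) + j) 1) : ℤ)
            + nrm T v0 ((A ++ A).getD ((m-1) + j + 1) 1)
            - nrm T v0 ((A ++ A).getD ((m-1) + j) 1 * (A ++ A).getD ((m-1) + j + 1) 1)))
        = ((nrm T v0 (A.getD (m-1) 1) : ℤ) + nrm T v0 (A.getD 0 1)
            - nrm T v0 (A.getD (m-1) 1 * A.getD 0 1))
          + ∑ j ∈ Finset.range (m - 1),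
            ((nrm T v0 (A.getD j 1) : ℤ) + nrm T v0 (A.getD (j+1) 1)
              - nrm T v0 (A.getD j 1 * A.getD (j+1) 1)) := by
      rw [show m = (m - 1) + 1 from by omega]
      rw [Finset.sum_range_succ']
      rw [show (m - 1) + 1 - 1 = m - 1 from by omega]
      have hfirst : ((A ++ A).getD ((m-1) + 0) 1) = A.getD (m-1) 1 := by
        rw [Nat.add_zero]
        exact hc1 (m-1) (by omega)
      have hfirst2 : ((A ++ A).getD ((m-1) + 0 + 1) 1) = A.getD 0 1 := by
        rw [Nat.add_zero, show (m - 1) + 1 = m + 0 from by omega]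
        exact hc2 0
      have hstep : ∀ k ∈ Finset.range (m - 1),
          ((nrm T v0 ((A ++ A).getD ((m-1) + (k+1)) 1) : ℤ)
            + nrm T v0 ((A ++ A).getD ((m-1) + (k+1) + 1) 1)
            - nrm T v0 ((A ++ A).getD ((m-1) + (k+1)) 1 * (A ++ A).getD ((m-1) + (k+1) + 1) 1))
          = ((nrm T v0 (A.getD k 1) : ℤ) + nrm T v0 (A.getD (k+1) 1)
            - nrm T v0 (A.getD k 1 * A.getD (k+1) 1)) := by
        intro k hk
        rw [Finset.mem_range] at hk
        rw [show (m-1) + (k+1) = m + k from by omega,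
          show m + k + 1 = m + (k+1) from by omega, hc2 k, hc2 (k+1)]
      rw [Finset.sum_congr rfl hstep, hfirst, hfirst2]
      ring
    rw [hsecond]
    ring
  rw [e1, e2] at key2
  -- cyclic strict inequality
  have hstrict : (∑ j ∈ Finset.range (m - 1),
        ((nrm T v0 (A.getD j 1) : ℤ) + nrm T v0 (A.getD (j+1) 1)
          - nrm T v0 (A.getD j 1 * A.getD (j+1) 1)))
      + ((nrm T v0 (A.getD (m-1) 1) : ℤ) + nrm T v0 (A.getD 0 1)
          - nrm T v0 (A.getD (m-1) 1 * A.getD 0 1))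
      < ∑ i ∈ Finset.range m, (nrm T v0 (A.getD i 1) : ℤ) := by
    set Cl : ℕ → ℤ := fun j => (nrm T v0 (A.getD j 1) : ℤ) + nrm T v0 (A.getD ((j+1) % m) 1)
      - nrm T v0 (A.getD j 1 * A.getD ((j+1) % m) 1) with hCl
    have hClsum : (∑ j ∈ Finset.range (m - 1),
          ((nrm T v0 (A.getD j 1) : ℤ) + nrm T v0 (A.getD (j+1) 1)
            - nrm T v0 (A.getD j 1 * A.getD (j+1) 1)))
        + ((nrm T v0 (A.getD (m-1) 1) : ℤ) + nrm T v0 (A.getD 0 1)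
            - nrm T v0 (A.getD (m-1) 1 * A.getD 0 1))
        = ∑ j ∈ Finset.range m, Cl j := by
      rw [show m = (m-1) + 1 from by omega, Finset.sum_range_succ,
        show (m-1) + 1 - 1 = m - 1 from by omega]
      congr 1
      · refine Finset.sum_congr rfl (fun j hj => ?_)
        rw [Finset.mem_range] at hj
        rw [hCl]
        simp only
        rw [Nat.mod_eq_of_lt (by omega)]
      · rw [hCl]
        simp only
        rw [show (m - 1 + 1) % m = 0 from by
          rw [show m - 1 + 1 = m from by omega]; exact Nat.mod_self m]
    have hperj : ∀ j ∈ Finset.range m, Cl j + Cl ((j+1) % m)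
        < 2 * (nrm T v0 (A.getD ((j+1) % m) 1) : ℤ) := by
      intro j hj
      rw [Finset.mem_range] at hj
      have hσ : (j+1) % m < m := Nat.mod_lt _ (by omega)
      exact aux_N3D hT hX (hmem' j hj) (hmem' _ hσ) (hmem' _ (Nat.mod_lt _ (by omega)))
        (hcyc j hj) (hcyc _ hσ)
    have hsumlt := Finset.sum_lt_sum_of_nonempty (Finset.nonempty_range_iff.mpr (by omega)) hperj
    rw [Finset.sum_add_distrib] at hsumlt
    rw [aux_shift_sum Cl m hm] at hsumlt
    have hr : (∑ j ∈ Finset.range m, 2 * (nrm T v0 (A.getD ((j+1) % m) 1) : ℤ))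
        = 2 * ∑ i ∈ Finset.range m, (nrm T v0 (A.getD i 1) : ℤ) := by
      rw [aux_shift_sum (fun i => 2 * (nrm T v0 (A.getD i 1) : ℤ)) m hm, Finset.mul_sum]
    rw [hr] at hsumlt
    rw [hClsum]
    omega
  omega

/-! ### Elliptic elements -/

private lemma aux_elliptic_sq (hT : T.IsTree) (v0 : V) {g : T ≃g T} (he : IsElliptic T g) :
    nrm T v0 (g * g) ≤ nrm T v0 g := by
  rcases he with ⟨u, hu⟩ | ⟨u, w, hadj, hu, hw⟩
  · have d1 : T.dist u (g v0) = T.dist u v0 := by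
      have h := aux_iso_dist hT g u v0
      rw [hu] at h
      exact h
    have d2 : T.dist u ((g*g) v0) = T.dist u v0 := by
      have h := aux_iso_dist hT (g*g) u v0
      rw [show (g*g) u = u from by show g (g u) = u; rw [hu, hu]] at h
      exact h
    have d3 : T.dist (g v0) ((g*g) v0) = T.dist v0 (g v0) := aux_iso_dist hT g v0 (g v0)
    have hg := aux_gromov hT u v0 (g v0) ((g*g) v0)
    show T.dist v0 ((g*g) v0) ≤ T.dist v0 (g v0)
    rcases min_le_iff.mp hg with h | h <;> omega
  · have e1 : T.dist u (g v0) = T.dist w v0 := by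
      have h := aux_iso_dist hT g w v0
      rw [hw] at h
      exact h
    have e2 : T.dist w (g v0) = T.dist u v0 := by
      have h := aux_iso_dist hT g u v0
      rw [hu] at h
      exact h
    have e3 : T.dist u ((g*g) v0) = T.dist u v0 := by
      have h := aux_iso_dist hT (g*g) u v0
      rw [show (g*g) u = u from by show g (g u) = u; rw [hu, hw]] at h
      exact h
    have e4 : T.dist w ((g*g) v0) = T.dist w v0 := by
      have h := aux_iso_dist hT (g*g) w v0
      rw [show (g*g) w = w from by show g (g w) = w; rw [hw, hu]] at h
      exact h
    have e5 : T.dist (g v0) ((g*g) v0) = T.dist v0 (g v0) := aux_iso_dist hT g v0 (g v0)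
    have hgu := aux_gromov hT u v0 (g v0) ((g*g) v0)
    have hgw := aux_gromov hT w v0 (g v0) ((g*g) v0)
    show T.dist v0 ((g*g) v0) ≤ T.dist v0 (g v0)
    rcases min_le_iff.mp hgu with h1 | h1 <;> rcases min_le_iff.mp hgw with h2 | h2 <;> omega

private lemma aux_elliptic_conj {g k : T ≃g T} (he : IsElliptic T g) :
    IsElliptic T (k * g * k⁻¹) := by
  rcases he with ⟨u, hu⟩ | ⟨u, w, hadj, hu, hw⟩
  · refine Or.inl ⟨k u, ?_⟩
    show k (g (k⁻¹ (k u))) = k u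
    rw [RelIso.inv_apply_self, hu]
  · refine Or.inr ⟨k u, k w, (SimpleGraph.Iso.map_adj_iff k).mpr hadj, ?_, ?_⟩
    · show k (g (k⁻¹ (k u))) = k w
      rw [RelIso.inv_apply_self, hu]
    · show k (g (k⁻¹ (k w))) = k u
      rw [RelIso.inv_apply_self, hw]

/-! ### Free group words -/

private lemma aux_toWord_chain {α : Type*} [DecidableEq α] (w : FreeGroup α) :
    w.toWord.Chain' fun p q => ¬(q.1 = p.1 ∧ q.2 = !p.2) := by
  show List.IsChain _ w.toWord
  rw [List.isChain_iff_getElem]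
  intro i hi
  rintro ⟨h1, h2⟩
  have hred : FreeGroup.reduce w.toWord = w.toWord := FreeGroup.reduce_toWord w
  obtain ⟨xx, bb, hxb⟩ : ∃ xx bb, w.toWord[i]'(by omega) = (xx, bb) :=
    ⟨_, _, Prod.mk.eta.symm⟩
  have hpair : w.toWord[i+1]'(by omega) = (xx, !bb) := by
    rw [Prod.ext_iff]
    constructor
    · rw [h1, hxb]
    · rw [h2, hxb]
  have hdec : w.toWord = w.toWord.take i ++ (xx, bb) :: (xx, !bb) :: w.toWord.drop (i+2) := by
    rw [← hxb, ← hpair]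
    conv_lhs => rw [← List.take_append_drop i w.toWord]
    congr 1
    rw [List.drop_eq_getElem_cons (by omega)]
    congr 1
    exact List.drop_eq_getElem_cons (by omega)
  exact FreeGroup.reduce.not (hred.trans hdec)

private lemma aux_cyc_red {α : Type*} [DecidableEq α] :
    ∀ (n : ℕ) (w : FreeGroup α), w.toWord.length ≤ n → w ≠ 1 →
      ∃ c v : FreeGroup α, w = c * v * c⁻¹ ∧ v ≠ 1 ∧
        ∀ p ∈ v.toWord.getLast?, ∀ q ∈ v.toWord.head?, ¬(q.1 = p.1 ∧ q.2 = !p.2) := by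
  intro n
  induction n with
  | zero =>
    intro w hlen hne
    exact absurd (FreeGroup.toWord_eq_nil_iff.mp (List.length_eq_zero_iff.mp (by omega))) hne
  | succ n ih =>
    intro w hlen hne
    by_cases hgood : ∀ p ∈ w.toWord.getLast?, ∀ q ∈ w.toWord.head?, ¬(q.1 = p.1 ∧ q.2 = !p.2)
    · exact ⟨1, w, by group, hne, hgood⟩
    · push_neg at hgood
      obtain ⟨p, hp, q, hq, hq1, hq2⟩ := hgood
      have hp2 : p = (q.1, !q.2) := by
        rw [Prod.ext_iff]
        exact ⟨hq1.symm, by simp [hq2]⟩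
      cases hL : w.toWord with
      | nil => exact absurd (FreeGroup.toWord_eq_nil_iff.mp hL) hne
      | cons q0 t =>
        have hq0 : q0 = q := by
          rw [hL] at hq
          simpa using hq
        subst hq0
        cases ht : t with
        | nil =>
          rw [hL, ht] at hp
          have hpq : q0 = p := by simpa using hp
          rw [← hpq] at hq2
          simp at hq2
        | cons b t' =>
          have hdl : w.toWord.dropLast ++ [p] = w.toWord := List.dropLast_append_getLast? p hp
          have hsplit : q0 :: ((b :: t').dropLast ++ [p]) = w.toWord := by
            rw [hL, ht]
            have : (q0 :: b :: t').dropLast = q0 :: (b :: t').dropLast := rfl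
            rw [hL, ht] at hdl
            rw [this] at hdl
            simpa using hdl
          set M := (b :: t').dropLast with hM
          set γ : FreeGroup α := FreeGroup.mk [q0] with hγdef
          have hγ : (FreeGroup.mk [p]) = γ⁻¹ := by
            rw [hγdef, FreeGroup.inv_mk]
            rw [hp2]
            rfl
          have hw : w = γ * FreeGroup.mk M * γ⁻¹ := by
            conv_lhs => rw [← FreeGroup.mk_toWord (x := w)]
            rw [← hsplit]
            rw [show q0 :: (M ++ [p]) = ([q0] ++ M) ++ [p] from by simp]
            rw [← FreeGroup.mul_mk, ← FreeGroup.mul_mk, hγ]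
          have hvne : FreeGroup.mk M ≠ 1 := by
            intro h1
            rw [h1] at hw
            rw [mul_one] at hw
            rw [mul_inv_cancel] at hw
            exact hne hw
          have hlen2 : (FreeGroup.mk M).toWord.length ≤ n := by
            rw [FreeGroup.toWord_mk]
            have hred := FreeGroup.Red.length_le (FreeGroup.reduce.red (L := M))
            have hMlen : M.length = t'.length := by
              rw [hM, List.length_dropLast]
              simp
            have hlt : w.toWord.length = t'.length + 2 := by
              rw [hL, ht]
              simp
            omega
          obtain ⟨c, v, hcv, hv1, hvgood⟩ := ih (FreeGroup.mk M) hlen2 hvne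
          refine ⟨γ * c, v, ?_, hv1, hvgood⟩
          rw [hw, hcv]
          group

end Aux

section Aux2

open SimpleGraph

variable [DecidableEq V] {T : SimpleGraph V}

/-- The letter map from `↥X × Bool` to automorphisms. -/
private def autOf (X : Set (T ≃g T)) : (↥X × Bool) → T ≃g T :=
  fun x => cond x.2 (x.1 : T ≃g T) (x.1 : T ≃g T)⁻¹

private lemma aux_aut_mem {X : Set (T ≃g T)} (p : ↥X × Bool) : autOf X p ∈ Xpm T X := by
  obtain ⟨⟨g, hg⟩, b⟩ := p
  cases b
  · exact Or.inr (Set.inv_mem_inv.mpr hg)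
  · exact Or.inl hg

private lemma aux_aut_adj {X : Set (T ≃g T)} (hN1 : N1 T X) {p q : ↥X × Bool}
    (h : ¬(q.1 = p.1 ∧ q.2 = !p.2)) : autOf X q ≠ (autOf X p)⁻¹ := by
  have hN1' : ∀ g : T ≃g T, g ∈ X → g⁻¹ ∈ X → False := by
    intro g h1 h2
    have h3 : g ∈ X ∩ X⁻¹ := ⟨h1, Set.mem_inv.mpr h2⟩
    rw [hN1] at h3
    exact h3
  obtain ⟨⟨gp, hgp⟩, bp⟩ := p
  obtain ⟨⟨gq, hgq⟩, bq⟩ := q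
  dsimp only [autOf] at h ⊢
  cases bp <;> cases bq <;> dsimp only [Bool.not_false, Bool.not_true, cond] at h ⊢ <;> intro heq
  · rw [inv_inv] at heq
    exact hN1' gq hgq (by rw [heq]; exact hgp)
  · rw [inv_inv] at heq
    exact h ⟨Subtype.ext heq, rfl⟩
  · exact h ⟨Subtype.ext (inv_injective heq), rfl⟩
  · exact hN1' gp hgp (by rw [← heq]; exact hgq)

end Aux2

section Main

open SimpleGraph

variable [DecidableEq V] {T : SimpleGraph V}

private lemma aux_main (hT : T.IsTree) (v0 : V) (X : Set (T ≃g T)) (hX : NReduced T v0 X) :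
    PurelyHyperbolic T (Subgroup.closure X) ∧ IsFreeBasis T X := by
  classical
  set φ : FreeGroup ↥X →* (T ≃g T) := FreeGroup.lift (fun x : X => (x : T ≃g T)) with hφdef
  have hrange : φ.range = Subgroup.closure X := by
    rw [hφdef, FreeGroup.range_lift_eq_closure]
    congr 1
    exact Subtype.range_coe
  have hA : ∀ w : FreeGroup ↥X, φ w = (w.toWord.map (autOf X)).prod := by
    intro w
    conv_lhs => rw [← FreeGroup.mk_toWord (x := w)]
    rw [hφdef, FreeGroup.lift_mk]
    rfl
  have hchainA : ∀ w : FreeGroup ↥X,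
      (w.toWord.map (autOf X)).Chain' fun p q => q ≠ p⁻¹ := by
    intro w
    show List.IsChain _ _
    rw [List.isChain_map]
    exact (aux_toWord_chain w).imp (fun a b hab => aux_aut_adj hX.2.1 hab)
  have hmemA : ∀ (w : FreeGroup ↥X) (g : T ≃g T), g ∈ w.toWord.map (autOf X) → g ∈ Xpm T X := by
    intro w g hg
    rw [List.mem_map] at hg
    obtain ⟨p, _, rfl⟩ := hg
    exact aux_aut_mem p
  have hpos : ∀ w : FreeGroup ↥X, w ≠ 1 → 1 ≤ nrm T v0 (φ w) := by
    intro w hw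
    have hne : w.toWord.map (autOf X) ≠ [] := by
      simp only [ne_eq, List.map_eq_nil_iff, FreeGroup.toWord_eq_nil_iff]
      exact hw
    rw [hA w]
    exact aux_prod_pos hT hX _ hne (hmemA w) (hchainA w)
  constructor
  · -- purely hyperbolic
    intro g hg hgne
    have hgr : g ∈ φ.range := by rw [hrange]; exact hg
    obtain ⟨w, rfl⟩ := hgr
    have hw1 : w ≠ 1 := by rintro rfl; exact hgne (map_one φ)
    obtain ⟨c, v, rfl, hv1, hvgood⟩ := aux_cyc_red w.toWord.length w le_rfl hw1
    intro hell
    have hellv : IsElliptic T (φ v) := by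
      have h2 : φ v = (φ c)⁻¹ * φ (c * v * c⁻¹) * ((φ c)⁻¹)⁻¹ := by
        rw [map_mul, map_mul, map_inv]
        group
      rw [h2]
      exact aux_elliptic_conj hell
    have hle := aux_elliptic_sq hT v0 hellv
    have hLne : v.toWord ≠ [] := by
      simp only [ne_eq, FreeGroup.toWord_eq_nil_iff]
      exact hv1
    have hAne : v.toWord.map (autOf X) ≠ [] := by
      simp only [ne_eq, List.map_eq_nil_iff, FreeGroup.toWord_eq_nil_iff]
      exact hv1
    have hjunc : ∀ p ∈ (v.toWord.map (autOf X)).getLast?,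
        ∀ q ∈ (v.toWord.map (autOf X)).head?, q ≠ p⁻¹ := by
      intro p hp q hq
      rw [List.getLast?_map] at hp
      rw [List.head?_map] at hq
      obtain ⟨p0, hp0, rfl⟩ := Option.map_eq_some_iff.mp (Option.mem_def.mp hp)
      obtain ⟨q0, hq0, rfl⟩ := Option.map_eq_some_iff.mp (Option.mem_def.mp hq)
      exact aux_aut_adj hX.2.1 (hvgood p0 hp0 q0 hq0)
    have hsq := aux_square hT hX _ hAne (hmemA v) (hchainA v) hjunc
    rw [← hA v] at hsq
    omega
  · constructor
    · rw [injective_iff_map_eq_one]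
      intro w hw
      by_contra hne
      have h1 := hpos w hne
      rw [hw] at h1
      have h0 : nrm T v0 (1 : T ≃g T) = 0 := by
        show T.dist v0 ((1 : T ≃g T) v0) = 0
        show T.dist v0 v0 = 0
        exact SimpleGraph.dist_self
      omega
    · exact hrange

end Main


/-- an N-reduced set generates a purely hyperbolic group freely. -/
theorem statement_6 {V : Type*} (T : SimpleGraph V) (hT : T.IsTree) (v0 : V)
    (X : Set (T ≃g T)) (hXfin : X.Finite) (hX : NReduced T v0 X) :
    PurelyHyperbolic T (Subgroup.closure X) ∧ IsFreeBasis T X := by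
  classical
  exact aux_main hT v0 X hX

end TreePaper

end
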